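/- arXiv:1109.4874 — 13 statements merged into one kernel-verified Lean document; each statement's English description precedes it below -/
import Mathlib

section
/- There exists a system of n+1 difference equations of the form f(x+a_i) - f(x) = 1 (i = 1,...,n+1) such that every subsystem of size n has a solution f : ℝ → ℝ, but the whole system has no solution. Concretely: if a_1,...,a_n are linearly independent over ℚ and a_{n+1} = -(a_1+...+a_n), then any n of the equations Δ_{a_i} f = 1 are simultaneously solvable, but all n+1 are not. -/
lemma exists_qlinear {n : ℕ} (b : Fin n → ℝ) (hb : LinearIndependent ℚ b) (t : Fin n → ℝ) :
    ∃ g : ℝ →ₗ[ℚ] ℝ, ∀ i, g (b i) = t i := by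
  let B := Module.Basis.sumExtend hb
  refine ⟨B.constr ℚ (Sum.elim t 0), fun i => ?_⟩
  have h : B (Sum.inl i) = b i := by
    simp [B, Module.Basis.sumExtend, Module.Basis.extend_apply_self, Equiv.Set.sumDiffSubset,
      Equiv.sumCongr, Equiv.ofInjective, Equiv.Set.union_symm_apply_left]
    rfl
  rw [← h, Module.Basis.constr_basis]
  simp

/-- A system of `n+1` difference equations `f (x + a i) - f x = 1`, where
`a 0, …, a (n-1)` are linearly independent over `ℚ` and `a n = -(a 0 + ⋯ + a (n-1))`:
every subsystem of size `n` (obtained by omitting one equation) has a solution,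
but the whole system has no solution. -/
theorem stmt0 (n : ℕ) (a : Fin (n + 1) → ℝ)
    (hli : LinearIndependent ℚ (fun i : Fin n => a i.castSucc))
    (hlast : a (Fin.last n) = -∑ i : Fin n, a i.castSucc) :
    (∀ j : Fin (n + 1), ∃ f : ℝ → ℝ,
        ∀ i : Fin (n + 1), i ≠ j → ∀ x : ℝ, f (x + a i) - f x = 1) ∧
    ¬ ∃ f : ℝ → ℝ, ∀ i : Fin (n + 1), ∀ x : ℝ, f (x + a i) - f x = 1 := by
  constructor
  · intro j
    rcases eq_or_ne j (Fin.last n) with hj | hj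
    · obtain ⟨g, hg⟩ := exists_qlinear _ hli (fun _ => (1 : ℝ))
      refine ⟨g, fun i hi x => ?_⟩
      obtain ⟨i', rfl⟩ := Fin.exists_castSucc_eq.2 (hj ▸ hi)
      rw [map_add, add_sub_cancel_left]
      exact hg i'
    · obtain ⟨j', rfl⟩ := Fin.exists_castSucc_eq.2 hj
      set t : Fin n → ℝ := fun i => 1 + (if i = j' then -((n : ℝ) + 1) else 0) with ht
      obtain ⟨g, hg⟩ := exists_qlinear _ hli t
      have hsum : ∑ i : Fin n, t i = -1 := by
        simp [ht, Finset.sum_add_distrib, Finset.sum_ite_eq']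
      have hglast : g (a (Fin.last n)) = 1 := by
        rw [hlast, map_neg, map_sum]
        simp only [hg]
        rw [hsum]; ring
      refine ⟨g, fun i hi x => ?_⟩
      rw [map_add, add_sub_cancel_left]
      rcases eq_or_ne i (Fin.last n) with rfl | hi'
      · exact hglast
      · obtain ⟨i', rfl⟩ := Fin.exists_castSucc_eq.2 hi'
        have : i' ≠ j' := fun h => hi (by rw [h])
        rw [hg i', ht]
        simp [this]
  · rintro ⟨f, hf⟩
    set b : ℕ → ℝ := fun i => if h : i < n + 1 then a ⟨i, h⟩ else 0 with hb
    have key : ∀ k, k ≤ n + 1 → f (∑ i ∈ Finset.range k, b i) = f 0 + k := by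
      intro k
      induction k with
      | zero => simp
      | succ k ih =>
        intro hk
        rw [Finset.sum_range_succ]
        have hk' : k < n + 1 := hk
        have hbk : b k = a ⟨k, hk⟩ := by simp [hb, Nat.lt_succ_iff.mp hk']
        have := hf ⟨k, hk⟩ (∑ i ∈ Finset.range k, b i)
        rw [← hbk] at this
        have h2 := ih (Nat.le_of_succ_le hk)
        push_cast
        linarith
    have h0 : ∑ i ∈ Finset.range (n + 1), b i = 0 := by
      have : ∑ i ∈ Finset.range (n + 1), b i = ∑ i : Fin (n + 1), a i := by
        rw [Finset.sum_range]
        apply Finset.sum_congr rfl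
        intro i _
        simp [hb, i.isLt, not_lt.mpr (Nat.lt_succ_iff.mp i.isLt)]
      rw [this, Fin.sum_univ_castSucc, hlast]
      ring
    have := key (n + 1) le_rfl
    rw [h0] at this
    have hn : (0:ℝ) ≤ (n:ℝ) := Nat.cast_nonneg n
    push_cast at this
    linarith
end

section
/- If a_1,...,a_{n+1} ∈ ℝ satisfy a_1 + ⋯ + a_{n+1} = 0, then there is no function f : ℝ → ℝ satisfying f(x + a_i) - f(x) = 1 for all x ∈ ℝ and all i = 1,...,n+1. -/
/-- If `a 0 + ⋯ + a n = 0` then there is no `f : ℝ → ℝ` with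
`f (x + a i) - f x = 1` for all `x` and all `i`. -/
theorem stmt1 (n : ℕ) (a : Fin (n + 1) → ℝ) (hsum : ∑ i, a i = 0) :
    ¬ ∃ f : ℝ → ℝ, ∀ i : Fin (n + 1), ∀ x : ℝ, f (x + a i) - f x = 1 := by
  rintro ⟨f, hf⟩
  have key : ∀ s : Finset (Fin (n + 1)), f (0 + ∑ i ∈ s, a i) = f 0 + s.card := by
    intro s
    induction s using Finset.induction with
    | empty => simp
    | @insert i s hx ih =>
      rw [Finset.sum_insert hx, Finset.card_insert_of_notMem hx]
      have h1 := hf i (0 + ∑ j ∈ s, a j)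
      have h2 : f (0 + ∑ j ∈ s, a j + a i) = f (0 + ∑ j ∈ s, a j) + 1 := by linarith
      rw [show (0 : ℝ) + (a i + ∑ j ∈ s, a j) = 0 + ∑ j ∈ s, a j + a i by ring, h2, ih]
      push_cast
      ring
  have h := key Finset.univ
  simp [hsum] at h
  have : (0:ℝ) ≤ (n:ℝ) := Nat.cast_nonneg n
  linarith
end

section
/- Let a_1,...,a_n ∈ ℝ be linearly independent over ℚ and let J ⊆ {1,...,n} have at most n-1 elements. Then there exists a function f : ℝ → ℝ with |f(x)| ≤ 1 for all x, such that f(x + a_i) - f(x) = (2/(n-1))·χ_{G_i}(x) for all x ∈ ℝ and all i ∈ J, where G_i is the additive subgroup of ℝ generated by {a_1,...,a_n} \ {a_i} and χ_{G_i} is its characteristic function. -/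
/-- For `a 0, …, a (n-1)` linearly independent over `ℚ` and `J` of size at most `n - 1`,
there is a function `f` with `|f| ≤ 1` solving the equations
`f (x + a i) - f x = (2/(n-1)) · χ_{G i} x` for all `i ∈ J`, where `G i` is the
additive subgroup generated by the `a j`, `j ≠ i`. -/
theorem stmt2 (n : ℕ) (hn : 2 ≤ n) (a : Fin n → ℝ) (hli : LinearIndependent ℚ a)
    (J : Finset (Fin n)) (hJ : J.card ≤ n - 1) :
    ∃ f : ℝ → ℝ, (∀ x, |f x| ≤ 1) ∧
      ∀ i ∈ J, ∀ x : ℝ,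
        f (x + a i) - f x =
          (2 / ((n : ℝ) - 1)) *
            Set.indicator ((AddSubgroup.closure {y : ℝ | ∃ j, j ≠ i ∧ a j = y} : AddSubgroup ℝ) :
              Set ℝ) 1 x := by
  classical
  set V := Submodule.span ℚ (Set.range a) with hV
  let b : Module.Basis (Fin n) ℚ V := Module.Basis.span hli
  let c : ℝ → Fin n → ℚ := fun x => if h : x ∈ V then (b.repr ⟨x, h⟩ : Fin n →₀ ℚ) else 0
  have haV : ∀ i, a i ∈ V := fun i => Submodule.subset_span ⟨i, rfl⟩
  have hsub : ∀ (i : Fin n) (g : Fin n → ℝ), g i = 0 →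
      ∑ j, g j = ∑ j : {j : Fin n // j ≠ i}, g j.val := by
    intro i g hg
    rw [← Finset.sum_subtype (Finset.univ.filter (· ≠ i)) (by simp) g]
    exact (Finset.sum_filter_of_ne (fun x _ hx => by rintro rfl; exact hx hg)).symm
  have hsum : ∀ x (hx : x ∈ V), x = ∑ j, (c x j : ℝ) * a j := by
    intro x hx
    have h2 : ((∑ i, b.repr ⟨x, hx⟩ i • b i : V) : ℝ) = x :=
      congrArg Subtype.val (b.sum_repr ⟨x, hx⟩)
    rw [AddSubmonoidClass.coe_finset_sum] at h2
    conv_lhs => rw [← h2]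
    refine Finset.sum_congr rfl fun j _ => ?_
    simp only [SetLike.val_smul, c, hx, dif_pos, Rat.smul_def, b]
    rw [Module.Basis.span_apply hli j]
  have huniq : ∀ (q : Fin n → ℚ) (x : ℝ), x = ∑ j, (q j : ℝ) * a j → c x = q := by
    intro q x hx
    have hxV : x ∈ V := by
      rw [hx]
      exact Submodule.sum_mem _ fun j _ => by
        have : (q j : ℝ) * a j = q j • a j := by simp [Rat.smul_def]
        rw [this]
        exact Submodule.smul_mem _ _ (haV j)
    have hveq : (⟨x, hxV⟩ : V) = ∑ j, q j • b j := by
      apply Subtype.val_injective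
      simp only [AddSubmonoidClass.coe_finset_sum, SetLike.val_smul]
      show x = _
      rw [hx]
      exact Finset.sum_congr rfl fun j _ => by
        rw [show ((Module.Basis.span hli j : V) : ℝ) = a j from congrArg Subtype.val (Module.Basis.span_apply hli j),
          Rat.smul_def]
    have hcx : c x = (b.repr ⟨x, hxV⟩ : Fin n →₀ ℚ) := by
      funext j; simp [c, hxV]
    rw [hcx, hveq, b.repr_sum_self]
  have hshift : ∀ (i : Fin n) (x : ℝ), x ∈ V →
      c (x + a i) = fun j => c x j + if j = i then 1 else 0 := by
    intro i x hx
    apply huniq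
    have h1 : ∑ j, ((c x j + if j = i then 1 else 0 : ℚ) : ℝ) * a j
        = ∑ j, (c x j : ℝ) * a j + ∑ j, (if j = i then (1:ℝ) else 0) * a j := by
      rw [← Finset.sum_add_distrib]
      refine Finset.sum_congr rfl fun j _ => ?_
      push_cast
      split <;> ring
    rw [h1, ← hsum x hx]
    congr 1
    rw [Finset.sum_congr rfl (fun j _ => by by_cases h : j = i <;> simp [h] :
      ∀ j ∈ Finset.univ, (if j = i then (1:ℝ) else 0) * a j = if j = i then a j else 0)]
    simp
  have hGmem : ∀ (i : Fin n) (x : ℝ),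
      (x ∈ (AddSubgroup.closure {y : ℝ | ∃ j, j ≠ i ∧ a j = y} : AddSubgroup ℝ)) ↔
        (x ∈ V ∧ (∀ j, ∃ m : ℤ, c x j = m) ∧ c x i = 0) := by
    intro i x
    have hset : {y : ℝ | ∃ j, j ≠ i ∧ a j = y}
        = Set.range (fun j : {j : Fin n // j ≠ i} => a j) := by
      ext y
      constructor
      · rintro ⟨j, hj, rfl⟩; exact ⟨⟨j, hj⟩, rfl⟩
      · rintro ⟨⟨j, hj⟩, rfl⟩; exact ⟨j, hj, rfl⟩
    rw [hset, ← Submodule.span_int_eq_addSubgroupClosure, Submodule.mem_toAddSubgroup,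
      Finsupp.mem_span_range_iff_exists_finsupp]
    constructor
    · rintro ⟨m, hm⟩
      set q : Fin n → ℚ := fun j => if h : j = i then 0 else (m ⟨j, h⟩ : ℚ) with hq
      have hxeq : x = ∑ j, (q j : ℝ) * a j := by
        rw [hsub i (fun j => (q j : ℝ) * a j) (by simp [hq]), ← hm,
          Finsupp.sum_fintype _ _ (by simp)]
        refine Finset.sum_congr rfl fun j _ => ?_
        simp only [hq, j.prop, dif_neg]
        push_cast [zsmul_eq_mul]
        rfl
      have hc := huniq q x hxeq
      have hxV : x ∈ V := by
        rw [hxeq]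
        exact Submodule.sum_mem _ fun j _ => by
          have : (q j : ℝ) * a j = q j • a j := by simp [Rat.smul_def]
          rw [this]
          exact Submodule.smul_mem _ _ (haV j)
      refine ⟨hxV, ?_, ?_⟩
      · intro j
        rw [hc]
        by_cases h : j = i
        · exact ⟨0, by simp [hq, h]⟩
        · exact ⟨m ⟨j, h⟩, by simp [hq, h]⟩
      · rw [hc]; simp [hq]
    · rintro ⟨hxV, hint, hzero⟩
      choose m hm using hint
      refine ⟨Finsupp.equivFunOnFinite.symm (fun j : {j : Fin n // j ≠ i} => m j.val), ?_⟩
      rw [Finsupp.sum_fintype _ _ (by simp)]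
      have hx := hsum x hxV
      rw [hx, hsub i (fun j => (c x j : ℝ) * a j) (by simp [hzero])]
      refine (Finset.sum_congr rfl fun j _ => ?_).symm
      simp only [Finsupp.coe_equivFunOnFinite_symm]
      rw [hm j.val]
      push_cast [zsmul_eq_mul]
      rfl
  -- the function
  let h : ℚ → ℝ := fun q => if 1 ≤ q then 1/2 else -1/2
  let P : ℝ → Prop := fun x => x ∈ V ∧ ∀ j, ∃ m : ℤ, c x j = m
  have hPdec : DecidablePred P := fun x => Classical.dec _
  let C : ℝ := 2 / ((n : ℝ) - 1)
  let f : ℝ → ℝ := fun x => if P x then C * ∑ i ∈ J, h (c x i) else 0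
  have hn1 : (1 : ℝ) ≤ (n : ℝ) - 1 := by
    have : (2 : ℝ) ≤ n := by exact_mod_cast hn
    linarith
  have hCpos : 0 < C := by
    have : (0:ℝ) < (n:ℝ) - 1 := by linarith
    positivity
  refine ⟨f, ?_, ?_⟩
  · intro x
    by_cases hp : P x
    · have habs : |∑ i ∈ J, h (c x i)| ≤ (J.card : ℝ) * (1/2) := by
        calc |∑ i ∈ J, h (c x i)| ≤ ∑ i ∈ J, |h (c x i)| := Finset.abs_sum_le_sum_abs _ _
        _ ≤ ∑ _i ∈ J, (1/2 : ℝ) := by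
            refine Finset.sum_le_sum fun i _ => ?_
            simp only [h]
            split <;> norm_num [abs_of_nonneg, abs_of_nonpos]
        _ = (J.card : ℝ) * (1/2) := by rw [Finset.sum_const, nsmul_eq_mul]
      have hJc : (J.card : ℝ) ≤ (n : ℝ) - 1 := by
        have h1 : (J.card : ℝ) ≤ ((n - 1 : ℕ) : ℝ) := by exact_mod_cast hJ
        have h2 : ((n - 1 : ℕ) : ℝ) = (n : ℝ) - 1 := by
          rw [Nat.cast_sub (by omega)]; norm_num
        linarith
      have : |f x| = C * |∑ i ∈ J, h (c x i)| := by
        simp only [f, if_pos hp, abs_mul, abs_of_pos hCpos]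
      rw [this]
      calc C * |∑ i ∈ J, h (c x i)| ≤ C * ((J.card : ℝ) * (1/2)) := by
            exact mul_le_mul_of_nonneg_left habs hCpos.le
        _ ≤ C * (((n:ℝ) - 1) * (1/2)) := by
            apply mul_le_mul_of_nonneg_left _ hCpos.le
            linarith
        _ = 1 := by
            field_simp [C]
            have hne : (n:ℝ) - 1 ≠ 0 := by linarith
            have : C * ((n:ℝ) - 1) = 2 := div_mul_cancel₀ (2:ℝ) hne
            linarith
    · simp [f, if_neg hp]
  · intro i hi x
    by_cases hp : P x
    · have hxV := hp.1
      have hcs := hshift i x hxV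
      have hpa : P (x + a i) := by
        refine ⟨Submodule.add_mem _ hxV (haV i), fun j => ?_⟩
        simp only [hcs]
        obtain ⟨m, hm⟩ := hp.2 j
        by_cases hji : j = i
        · refine ⟨m + 1, ?_⟩
          rw [if_pos hji, hm]; push_cast; try ring
        · refine ⟨m, ?_⟩
          rw [if_neg hji, hm]; ring
      have hfx : f (x + a i) - f x = C * (h (c x i + 1) - h (c x i)) := by
        simp only [f, if_pos hp, if_pos hpa, ← mul_sub]
        congr 1
        rw [← Finset.sum_sub_distrib]
        rw [Finset.sum_eq_single i]
        · rw [hcs]; simp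
        · intro k hk hki
          rw [hcs]; simp [hki]
        · intro hii; exact absurd hi hii
      rw [hfx]
      obtain ⟨m, hm⟩ := hp.2 i
      by_cases hz : c x i = 0
      · have hind : Set.indicator
            ((AddSubgroup.closure {y : ℝ | ∃ j, j ≠ i ∧ a j = y} : AddSubgroup ℝ) : Set ℝ) (1 : ℝ → ℝ) x
            = (1:ℝ) := by
          rw [Set.indicator_of_mem]
          · rfl
          · exact (hGmem i x).mpr ⟨hxV, hp.2, hz⟩
        rw [hind, hz]
        norm_num [h, C]
      · have hind : Set.indicator
            ((AddSubgroup.closure {y : ℝ | ∃ j, j ≠ i ∧ a j = y} : AddSubgroup ℝ) : Set ℝ) (1 : ℝ → ℝ) x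
            = (0:ℝ) := by
          rw [Set.indicator_of_notMem]
          intro hmem
          exact hz ((hGmem i x).mp hmem).2.2
        rw [hind, mul_zero]
        have hmne : m ≠ 0 := by rintro rfl; exact hz (by simp [hm])
        have : h (c x i + 1) = h (c x i) := by
          rcases lt_or_gt_of_ne hmne with hlt | hgt
          · have h1 : ¬ (1 : ℚ) ≤ c x i := by
              rw [hm]
              have : (m : ℚ) ≤ -1 := by exact_mod_cast (by omega : m ≤ -1)
              linarith
            have h2 : ¬ (1 : ℚ) ≤ c x i + 1 := by
              rw [hm]
              have : (m : ℚ) ≤ -1 := by exact_mod_cast (by omega : m ≤ -1)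
              linarith
            simp [h, h1, h2]
          · have h1 : (1 : ℚ) ≤ c x i := by
              rw [hm]; exact_mod_cast (by omega : (1:ℤ) ≤ m)
            have h2 : (1 : ℚ) ≤ c x i + 1 := by linarith
            simp [h, h1, h2]
        rw [this]
        ring
    · have hpa : ¬ P (x + a i) := by
        intro hpa
        apply hp
        have hxV : x ∈ V := by
          have := Submodule.sub_mem V hpa.1 (haV i)
          simpa using this
        refine ⟨hxV, fun j => ?_⟩
        obtain ⟨m, hm⟩ := hpa.2 j
        rw [hshift i x hxV] at hm
        by_cases hji : j = i
        · subst hji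
          exact ⟨m - 1, by push_cast; simp at hm; linarith⟩
        · exact ⟨m, by simpa [hji] using hm⟩
      have hind : Set.indicator
          ((AddSubgroup.closure {y : ℝ | ∃ j, j ≠ i ∧ a j = y} : AddSubgroup ℝ) : Set ℝ) (1 : ℝ → ℝ) x
          = (0:ℝ) := by
        rw [Set.indicator_of_notMem]
        intro hmem
        exact hp ⟨((hGmem i x).mp hmem).1, ((hGmem i x).mp hmem).2.1⟩
      rw [hind]
      simp [f, if_neg hp, if_neg hpa]
end

section
/- Let a_1,...,a_n ∈ ℝ be linearly independent over ℚ, and for each i let G_i be the additive group generated by {a_j : j ≠ i}. If f : ℝ → ℝ satisfies f(x + a_i) - f(x) = (2/(n-1))·χ_{G_i}(x) for all x and all i = 1,...,n, then f(a_1 + ⋯ + a_n) - f(0) = 2n/(n-1); in particular no such f satisfies |f| ≤ 1 when n ≥ 2. -/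
/-- If `a 0, …, a (n-1)` are linearly independent over `ℚ`, `G i` is the additive subgroup
generated by the `a j`, `j ≠ i`, and `f` solves all the equations
`f (x + a i) - f x = (2/(n-1)) · χ_{G i} x`, then `f (a 0 + ⋯ + a (n-1)) - f 0 = 2n/(n-1)`;
in particular if `n ≥ 2` then `|f| ≤ 1` fails. -/
theorem stmt3 (n : ℕ) (a : Fin n → ℝ) (hli : LinearIndependent ℚ a) (f : ℝ → ℝ)
    (hf : ∀ i : Fin n, ∀ x : ℝ,
      f (x + a i) - f x =
        (2 / ((n : ℝ) - 1)) *
          Set.indicator ((AddSubgroup.closure {y : ℝ | ∃ j, j ≠ i ∧ a j = y} : AddSubgroup ℝ) :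
            Set ℝ) 1 x) :
    f (∑ i, a i) - f 0 = 2 * (n : ℝ) / ((n : ℝ) - 1) ∧
    (2 ≤ n → ¬ ∀ x, |f x| ≤ 1) := by
  classical
  set A : ℕ → ℝ := fun m => if h : m < n then a ⟨m, h⟩ else 0 with hA
  have key : f (∑ i ∈ Finset.range n, A i) - f 0 = 2 * (n : ℝ) / ((n : ℝ) - 1) := by
    have h0 : (∑ i ∈ Finset.range 0, A i) = 0 := by simp
    have htel : f (∑ i ∈ Finset.range n, A i) - f (∑ i ∈ Finset.range 0, A i)
        = ∑ k ∈ Finset.range n,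
            (f (∑ i ∈ Finset.range (k + 1), A i) - f (∑ i ∈ Finset.range k, A i)) :=
      (Finset.sum_range_sub (fun m => f (∑ i ∈ Finset.range m, A i)) n).symm
    rw [h0] at htel
    rw [htel]
    have hterm : ∀ k ∈ Finset.range n,
        (f (∑ i ∈ Finset.range (k + 1), A i) - f (∑ i ∈ Finset.range k, A i))
          = 2 / ((n : ℝ) - 1) := by
      intro k hk
      have hkn : k < n := Finset.mem_range.mp hk
      rw [Finset.sum_range_succ]
      have hAk : A k = a ⟨k, hkn⟩ := by simp [hA, hkn]
      rw [hAk, hf ⟨k, hkn⟩]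
      have hmem : (∑ i ∈ Finset.range k, A i) ∈
          (AddSubgroup.closure {y : ℝ | ∃ j, j ≠ (⟨k, hkn⟩ : Fin n) ∧ a j = y}) := by
        apply AddSubgroup.sum_mem
        intro i hi
        have hik : i < k := Finset.mem_range.mp hi
        have hin : i < n := hik.trans hkn
        have hAi : A i = a ⟨i, hin⟩ := by simp [hA, hin]
        rw [hAi]
        apply AddSubgroup.subset_closure
        exact ⟨⟨i, hin⟩, by simp [Fin.ext_iff]; omega, rfl⟩
      rw [Set.indicator_of_mem hmem]
      simp
    rw [Finset.sum_congr rfl hterm, Finset.sum_const, Finset.card_range, nsmul_eq_mul]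
    ring
  have hsum : (∑ i, a i) = ∑ i ∈ Finset.range n, A i := by
    rw [← Fin.sum_univ_eq_sum_range]
    exact Finset.sum_congr rfl fun i _ => by simp [hA, i.isLt]
  refine ⟨by rw [hsum]; exact key, ?_⟩
  intro hn hb
  have h2 : (2 : ℝ) ≤ (n : ℝ) := by exact_mod_cast hn
  have hlt : (2 : ℝ) < 2 * (n : ℝ) / ((n : ℝ) - 1) := by
    rw [lt_div_iff₀ (by linarith)]
    linarith
  have ha := abs_le.mp (hb (∑ i, a i))
  have hb0 := abs_le.mp (hb 0)
  have : f (∑ i, a i) - f 0 ≤ 2 := by linarith [ha.2, hb0.1]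
  rw [hsum, key] at this
  linarith
end

section
/- Let (a_i)_{i≥1} be a sequence of reals linearly independent over ℚ, and for each i let G_i be the additive group generated by {a_j : j ≠ i}. If f : ℝ → ℝ satisfies f(x + a_i) - f(x) = χ_{G_i}(x) for all x ∈ ℝ and all i ≥ 1, then f(a_1 + ⋯ + a_n) - f(0) = n for every n; in particular f is unbounded. -/
/-- If `(a i)` is a sequence of reals linearly independent over `ℚ`, `G i` is the additive
subgroup generated by the `a j`, `j ≠ i`, and `f` solves all the equations
`f (x + a i) - f x = χ_{G i} x`, then `f (a 0 + ⋯ + a (n-1)) - f 0 = n` for every `n`;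
in particular `f` is unbounded. -/
theorem stmt4 (a : ℕ → ℝ) (hli : LinearIndependent ℚ a) (f : ℝ → ℝ)
    (hf : ∀ i : ℕ, ∀ x : ℝ,
      f (x + a i) - f x =
        Set.indicator ((AddSubgroup.closure {y : ℝ | ∃ j, j ≠ i ∧ a j = y} : AddSubgroup ℝ) :
          Set ℝ) 1 x) :
    (∀ n : ℕ, f (∑ i ∈ Finset.range n, a i) - f 0 = n) ∧
    ¬ ∃ C : ℝ, ∀ x, |f x| ≤ C := by
  have key : ∀ n : ℕ, f (∑ i ∈ Finset.range n, a i) - f 0 = n := by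
    intro n
    induction n with
    | zero => simp
    | succ n ih =>
      rw [Finset.sum_range_succ]
      have hmem : (∑ i ∈ Finset.range n, a i) ∈
          (AddSubgroup.closure {y : ℝ | ∃ j, j ≠ n ∧ a j = y}) := by
        apply AddSubgroup.sum_mem
        intro i hi
        exact AddSubgroup.subset_closure ⟨i, (Finset.mem_range.mp hi).ne, rfl⟩
      have h := hf n (∑ i ∈ Finset.range n, a i)
      rw [Set.indicator_of_mem hmem, Pi.one_apply] at h
      push_cast
      linarith
  refine ⟨key, ?_⟩
  rintro ⟨C, hC⟩
  have h1 := key (⌈2 * C⌉₊ + 1)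
  have h2 := hC (∑ i ∈ Finset.range (⌈2 * C⌉₊ + 1), a i)
  have h3 := hC 0
  push_cast at h1
  have h5 : (2 * C : ℝ) ≤ ⌈2 * C⌉₊ := Nat.le_ceil _
  have h6 := abs_le.mp h2
  have h7 := abs_le.mp h3
  linarith
end

section
/- Let B ⊆ ℝ be a dense additive subgroup with |B| < 2^ω. Then there exists a Darboux function f : ℝ → ℝ such that f(x+b) - f(x) = χ_{{0}}(x+b) - χ_{{0}}(x) for every b ∈ B and every x ∈ ℝ. (Namely, take a bijection φ from the cosets ℝ/B onto ℝ and set f(x) = φ(B + x) + χ_{{0}}(x).) -/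
/-- If `B` is a dense additive subgroup of `ℝ` of cardinality less than the continuum,
then there is a Darboux function `f : ℝ → ℝ` with
`f (x+b) - f x = χ_{{0}} (x+b) - χ_{{0}} x` for all `b ∈ B` and all `x`. -/
theorem stmt6 (B : AddSubgroup ℝ) (hd : Dense (B : Set ℝ))
    (hcard : Cardinal.mk B < Cardinal.continuum) :
    ∃ f : ℝ → ℝ,
      (∀ a b : ℝ, a < b → ∀ y ∈ Set.uIcc (f a) (f b), ∃ x ∈ Set.Icc a b, f x = y) ∧
      ∀ b ∈ B, ∀ x : ℝ, f (x + b) - f x =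
        Set.indicator ({0} : Set ℝ) 1 (x + b) - Set.indicator ({0} : Set ℝ) 1 x := by
  -- cardinality of quotient is at least continuum
  have hq : Cardinal.continuum ≤ Cardinal.mk (ℝ ⧸ B) := by
    by_contra h
    push_neg at h
    have hmk : Cardinal.mk ℝ = Cardinal.mk (ℝ ⧸ B) * Cardinal.mk B := by
      have h1 := Cardinal.mk_congr
        (AddSubgroup.addGroupEquivQuotientProdAddSubgroup (s := B))
      rw [h1, Cardinal.mk_prod, Cardinal.lift_id, Cardinal.lift_id]
    have : Cardinal.mk ℝ < Cardinal.continuum := by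
      rw [hmk]
      exact Cardinal.mul_lt_of_lt Cardinal.aleph0_le_continuum h hcard
    simp [Cardinal.mk_real] at this
  -- get an injection ℝ ↪ ℝ ⧸ B, hence surjection φ back
  rw [← Cardinal.mk_real, Cardinal.le_def] at hq
  obtain ⟨e⟩ := hq
  set φ : (ℝ ⧸ B) → ℝ := Function.invFun e with hφ
  have hφs : Function.Surjective φ := Function.invFun_surjective e.injective
  -- each coset is dense
  have hcoset : ∀ q : ℝ ⧸ B, Dense {x : ℝ | (x : ℝ ⧸ B) = q} := by
    intro q
    obtain ⟨r, rfl⟩ := QuotientAddGroup.mk_surjective q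
    have heq : {x : ℝ | (x : ℝ ⧸ B) = (r : ℝ ⧸ B)} = (fun x => x - r) ⁻¹' (B : Set ℝ) := by
      ext x
      simp only [Set.mem_setOf_eq, Set.mem_preimage, SetLike.mem_coe]
      exact QuotientAddGroup.eq_iff_sub_mem
    rw [heq]
    exact hd.preimage (Homeomorph.subRight r).isOpenMap
  refine ⟨fun x => φ (x : ℝ ⧸ B) + Set.indicator ({0} : Set ℝ) 1 x, ?_, ?_⟩
  · intro a b hab y _
    obtain ⟨q, rfl⟩ := hφs y
    -- find x ∈ Icc a b, x ≠ 0, in the coset q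
    have : ∃ x, x ∈ Set.Icc a b ∧ x ≠ 0 ∧ (x : ℝ ⧸ B) = q := by
      by_cases h0 : a < 0 ∧ 0 < b
      · obtain ⟨x, hx1, hx2⟩ := (hcoset q).inter_open_nonempty (Set.Ioo 0 b) isOpen_Ioo
          (Set.nonempty_Ioo.2 h0.2)
        exact ⟨x, ⟨le_of_lt (h0.1.trans hx1.1), hx1.2.le⟩, ne_of_gt hx1.1, hx2⟩
      · obtain ⟨x, hx1, hx2⟩ := (hcoset q).inter_open_nonempty (Set.Ioo a b) isOpen_Ioo
          (Set.nonempty_Ioo.2 hab)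
        refine ⟨x, Set.Ioo_subset_Icc_self hx1, ?_, hx2⟩
        rintro rfl
        exact h0 ⟨hx1.1, hx1.2⟩
    obtain ⟨x, hx, hx0, hxq⟩ := this
    refine ⟨x, hx, ?_⟩
    dsimp only
    rw [hxq, Set.indicator_of_notMem (by simpa using hx0), add_zero]
  · intro b hb x
    have : ((x + b : ℝ) : ℝ ⧸ B) = (x : ℝ ⧸ B) := by
      rw [QuotientAddGroup.eq_iff_sub_mem]
      simpa using hb
    dsimp only
    rw [this]; ring
end

section
/- Let h : ℝ → ℝ have the Baire property and let (t_n) be a real sequence with t_n → 0. Then there is a comeager (residual) set of points x at which h(x + t_n) → h(x). -/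
/-- If `h : ℝ → ℝ` has the Baire property (equivalently, is continuous on some comeager set)
and `t n → 0`, then the set of points `x` with `h (x + t n) → h x` is comeager. -/
theorem stmt8 (h : ℝ → ℝ) (hBP : ∃ s ∈ residual ℝ, ContinuousOn h s)
    (t : ℕ → ℝ) (ht : Filter.Tendsto t Filter.atTop (nhds 0)) :
    {x : ℝ | Filter.Tendsto (fun n => h (x + t n)) Filter.atTop (nhds (h x))}
      ∈ residual ℝ := by
  obtain ⟨s, hs, hcont⟩ := hBP
  have hmem : ∀ n : ℕ, {x : ℝ | x + t n ∈ s} ∈ residual ℝ := fun n =>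
    tendsto_residual_of_isOpenMap (continuous_add_right (t n))
      (isOpenMap_add_right (t n)) hs
  have hall : {x : ℝ | ∀ n, x + t n ∈ s} ∈ residual ℝ := by
    rw [show {x : ℝ | ∀ n, x + t n ∈ s} = ⋂ n, {x : ℝ | x + t n ∈ s} by
      ext x; simp]
    exact (countable_iInter_mem.mpr hmem)
  filter_upwards [hs, hall] with x hxs hx
  have hx0 : Filter.Tendsto (fun n => x + t n) Filter.atTop (nhds x) := by
    have := (tendsto_const_nhds (x := x) (f := Filter.atTop (α := ℕ))).add ht
    simpa using this
  have hxin : Filter.Tendsto (fun n => x + t n) Filter.atTop (nhdsWithin x s) :=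
    tendsto_nhdsWithin_of_tendsto_nhds_of_eventually_within _ hx0
      (Filter.Eventually.of_forall hx)
  exact (hcont x hxs).tendsto.comp hxin
end

section
/- Let φ₁, φ₂ : ℝ → ℝ be functions of Baire class 1, with φ₁ periodic mod b₁ and φ₂ periodic mod b₂ (b₁, b₂ ≠ 0), and let c > 1. If φ₁(x) = φ₂(x)·c^x for all x ∈ ℝ, then φ₂ is identically zero (and hence so is φ₁). -/
open Filter

/-- `f` is a pointwise limit of continuous functions. -/
def BaireClassOne (f : ℝ → ℝ) : Prop :=
  ∃ g : ℕ → ℝ → ℝ, (∀ n, Continuous (g n)) ∧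
    ∀ x, Filter.Tendsto (fun n => g n x) Filter.atTop (nhds (f x))

/-- A Baire class 1 function is bounded on some ball. -/
lemma baire_bounded_ball {f : ℝ → ℝ} (hf : BaireClassOne f) :
    ∃ (p δ : ℝ) (M : ℝ), 0 < δ ∧ ∀ y ∈ Metric.ball p δ, |f y| ≤ M := by
  obtain ⟨g, hg, hlim⟩ := hf
  set A : ℕ → Set ℝ := fun N => {x | ∀ n, N ≤ n → |g n x| ≤ N} with hA
  have hclosed : ∀ N, IsClosed (A N) := by
    intro N
    have : A N = ⋂ (n : ℕ) (_ : N ≤ n), {x | |g n x| ≤ N} := by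
      ext x; simp [hA, Set.mem_iInter]
    rw [this]
    exact isClosed_iInter fun n => isClosed_iInter fun _ =>
      isClosed_le (continuous_abs.comp (hg n)) continuous_const
  have hcover : (⋃ N, A N) = Set.univ := by
    refine Set.eq_univ_of_forall fun x => ?_
    have h1 : ∀ᶠ n in atTop, |g n x| ≤ |f x| + 1 := by
      have := (hlim x).abs
      have : ∀ᶠ n in atTop, |g n x| < |f x| + 1 :=
        this.eventually_lt_const (by linarith [abs_nonneg (f x)])
      exact this.mono fun n hn => hn.le
    obtain ⟨N₀, hN₀⟩ := eventually_atTop.mp h1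
    refine Set.mem_iUnion.2 ⟨max N₀ ⌈|f x| + 1⌉₊, fun n hn => ?_⟩
    have h2 : |g n x| ≤ |f x| + 1 := hN₀ n (le_trans (le_max_left _ _) hn)
    calc |g n x| ≤ |f x| + 1 := h2
      _ ≤ (⌈|f x| + 1⌉₊ : ℝ) := Nat.le_ceil _
      _ ≤ ((max N₀ ⌈|f x| + 1⌉₊ : ℕ) : ℝ) := by exact_mod_cast Nat.cast_le.2 (le_max_right _ _)
  obtain ⟨N, ⟨p, hp⟩⟩ := nonempty_interior_of_iUnion_of_closed hclosed hcover
  obtain ⟨δ, hδ, hball⟩ := Metric.isOpen_iff.mp isOpen_interior p hp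
  refine ⟨p, δ, N, hδ, fun y hy => ?_⟩
  have hyA : y ∈ A N := interior_subset (hball hy)
  exact le_of_tendsto (hlim y).abs (eventually_atTop.2 ⟨N, fun n hn => hyA n hn⟩)

lemma key_growth {φ : ℝ → ℝ} {b c : ℝ} (hc : 0 < c)
    (hstep : ∀ y, φ (y + b) = φ y * c ^ (-b)) :
    ∀ (n : ℤ) (y : ℝ), φ (y + n * b) = φ y * c ^ (-(n * b)) := by
  have hpos : ∀ t : ℝ, (0:ℝ) < c ^ t := fun t => Real.rpow_pos_of_pos hc t
  intro n
  induction n using Int.induction_on with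
  | zero => intro y; simp
  | succ n ih =>
    intro y
    push_cast
    push_cast at ih
    have h1 : y + ((n : ℝ) + 1) * b = (y + (n:ℝ) * b) + b := by ring
    rw [h1, hstep, ih, mul_assoc, ← Real.rpow_add hc]
    ring_nf
  | pred n ih =>
    intro y
    push_cast
    push_cast at ih
    have h2 := hstep (y + (-(n:ℝ) - 1) * b)
    have h1 : (y + (-(n:ℝ) - 1) * b) + b = y + (-(n:ℝ)) * b := by ring
    rw [h1, ih] at h2
    have h3 : φ (y + (-(n:ℝ) - 1) * b) = φ y * c ^ (-(-(n:ℝ) * b)) / c ^ (-b) := by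
      field_simp at h2 ⊢
      linarith [h2]
    rw [h3, div_eq_mul_inv, ← Real.rpow_neg hc.le, mul_assoc, ← Real.rpow_add hc]
    ring_nf

/-- If `φ₁, φ₂` are Baire class 1, periodic mod `b₁` resp. `b₂` (both nonzero), `c > 1`
and `φ₁ x = φ₂ x · c^x` for all `x`, then `φ₂` (hence `φ₁`) vanishes identically. -/
theorem stmt10 (φ₁ φ₂ : ℝ → ℝ) (b₁ b₂ : ℝ) (hb₁ : b₁ ≠ 0) (hb₂ : b₂ ≠ 0)
    (h₁ : BaireClassOne φ₁) (h₂ : BaireClassOne φ₂)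
    (hp₁ : ∀ x, φ₁ (x + b₁) = φ₁ x) (hp₂ : ∀ x, φ₂ (x + b₂) = φ₂ x)
    (c : ℝ) (hc : 1 < c) (heq : ∀ x, φ₁ x = φ₂ x * c ^ x) :
    ∀ x, φ₂ x = 0 ∧ φ₁ x = 0 := by
  have hc0 : (0:ℝ) < c := lt_trans one_pos hc
  have hpos : ∀ t : ℝ, (0:ℝ) < c ^ t := fun t => Real.rpow_pos_of_pos hc0 t
  have hstep : ∀ y, φ₂ (y + b₁) = φ₂ y * c ^ (-b₁) := by
    intro y
    have h1 : φ₂ (y + b₁) * c ^ (y + b₁) = φ₂ y * c ^ y := by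
      rw [← heq, ← heq, hp₁]
    rw [Real.rpow_add hc0] at h1
    have h2 : c ^ y ≠ 0 := (hpos y).ne'
    have h3 : c ^ b₁ ≠ 0 := (hpos b₁).ne'
    have h1' : φ₂ (y + b₁) * c ^ b₁ = φ₂ y :=
      mul_right_cancel₀ h2 (by linear_combination h1)
    rw [Real.rpow_neg hc0.le, ← h1', mul_assoc, mul_inv_cancel₀ h3, mul_one]
  have key : ∀ (n : ℤ) (y : ℝ), φ₂ (y + n * b₁) = φ₂ y * c ^ (-(n * b₁)) :=
    key_growth hc0 hstep
  have per2 : ∀ (m : ℤ) (y : ℝ), φ₂ (y + m * b₂) = φ₂ y := fun m y =>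
    (Function.Periodic.int_mul hp₂ m) y
  suffices h : ∀ x, φ₂ x = 0 by
    intro x; exact ⟨h x, by rw [heq, h x, zero_mul]⟩
  by_cases hrat : ∃ k l : ℤ, k ≠ 0 ∧ (k:ℝ) * b₁ + l * b₂ = 0
  · obtain ⟨k, l, hk, hkl⟩ := hrat
    intro x
    have h1 : φ₂ ((x + k * b₁) + l * b₂) = φ₂ (x + k * b₁) := per2 l (x + k * b₁)
    have h2 : (x + k * b₁) + l * b₂ = x := by linarith
    rw [h2, key k x] at h1
    have ht : -((k:ℝ) * b₁) ≠ 0 := by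
      simp only [neg_ne_zero]
      exact mul_ne_zero (Int.cast_ne_zero.mpr hk) hb₁
    have hct : c ^ (-((k:ℝ) * b₁)) ≠ 1 := by
      intro hco
      rcases ht.lt_or_gt with h | h
      · have := (Real.rpow_lt_rpow_left_iff hc).2 h
        rw [hco, Real.rpow_zero] at this; exact lt_irrefl _ this
      · have := (Real.rpow_lt_rpow_left_iff hc).2 h
        rw [hco, Real.rpow_zero] at this; exact lt_irrefl _ this
    have h5 : φ₂ x * (1 - c ^ (-((k:ℝ) * b₁))) = 0 := by linarith [h1]
    rcases mul_eq_zero.mp h5 with h | h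
    · exact h
    · exact absurd (by linarith : c ^ (-((k:ℝ) * b₁)) = 1) hct
  · intro x
    by_contra hx0
    obtain ⟨p, δ, M, hδ, hM⟩ := baire_bounded_ball h₂
    set T : ℝ := |b₂| with hT
    have hT0 : 0 < T := abs_pos.mpr hb₂
    haveI : Fact (0 < T) := ⟨hT0⟩
    set a : ℝ := -|b₁| with ha
    obtain ⟨e₁, he₁⟩ : ∃ e : ℤ, a = e * b₁ := by
      rcases abs_cases b₁ with ⟨h, _⟩ | ⟨h, _⟩
      · exact ⟨-1, by rw [ha, h]; push_cast; ring⟩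
      · exact ⟨1, by rw [ha, h]; push_cast; ring⟩
    obtain ⟨e₂, he₂⟩ : ∃ e : ℤ, T = e * b₂ := by
      rcases abs_cases b₂ with ⟨h, _⟩ | ⟨h, _⟩
      · exact ⟨1, by rw [hT, h]; push_cast; ring⟩
      · exact ⟨-1, by rw [hT, h]; push_cast; ring⟩
    have hS : Dense ((AddSubgroup.closure {b₁, b₂} : AddSubgroup ℝ) : Set ℝ) := by
      rcases AddSubgroup.dense_or_cyclic (AddSubgroup.closure {b₁, b₂}) with h | ⟨a₀, ha₀⟩
      · exact h
      · exfalso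
        have hb₁m : b₁ ∈ AddSubgroup.closure {b₁, b₂} :=
          AddSubgroup.subset_closure (by simp)
        have hb₂m : b₂ ∈ AddSubgroup.closure {b₁, b₂} :=
          AddSubgroup.subset_closure (by simp)
        rw [ha₀, AddSubgroup.mem_closure_singleton] at hb₁m hb₂m
        obtain ⟨n, hn⟩ := hb₁m
        obtain ⟨m, hm⟩ := hb₂m
        have hm0 : m ≠ 0 := by
          rintro rfl; rw [zero_zsmul] at hm; exact hb₂ hm.symm
        refine hrat ⟨m, -n, hm0, ?_⟩
        rw [zsmul_eq_mul] at hn hm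
        push_cast
        linear_combination (n : ℝ) * hm - (m : ℝ) * hn
    set θ : AddCircle T := ((a : ℝ) : AddCircle T) with hθ
    -- membership of generators in zmultiples θ
    have hcb₂ : ((b₂ : ℝ) : AddCircle T) = 0 := by
      have : b₂ ∈ AddSubgroup.zmultiples T := by
        rcases abs_cases b₂ with ⟨h, _⟩ | ⟨h, _⟩
        · exact AddSubgroup.mem_zmultiples_iff.mpr ⟨1, by rw [one_zsmul, hT, h]⟩
        · exact AddSubgroup.mem_zmultiples_iff.mpr ⟨-1, by rw [hT, h]; simp⟩
      exact (QuotientAddGroup.eq_zero_iff _).mpr this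
    have hcb₁ : ((b₁ : ℝ) : AddCircle T) ∈ AddSubgroup.zmultiples θ := by
      rcases abs_cases b₁ with ⟨h, _⟩ | ⟨h, _⟩
      · refine AddSubgroup.mem_zmultiples_iff.mpr ⟨-1, ?_⟩
        have haa : a = -b₁ := by rw [ha, h]
        rw [hθ, haa]
        simp
      · refine AddSubgroup.mem_zmultiples_iff.mpr ⟨1, ?_⟩
        have haa : a = b₁ := by rw [ha, h]; ring
        rw [hθ, haa, one_zsmul]
    have himg : (((↑) : ℝ → AddCircle T) '' (AddSubgroup.closure {b₁, b₂} : AddSubgroup ℝ)) ⊆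
        (AddSubgroup.zmultiples θ : Set (AddCircle T)) := by
      rintro _ ⟨s, hs, rfl⟩
      have hle : AddSubgroup.closure {b₁, b₂} ≤
          AddSubgroup.comap (QuotientAddGroup.mk' (AddSubgroup.zmultiples T))
            (AddSubgroup.zmultiples θ) := by
        rw [AddSubgroup.closure_le]
        rintro z (rfl | rfl)
        · exact hcb₁
        · show ((z : ℝ) : AddCircle T) ∈ AddSubgroup.zmultiples θ
          rw [hcb₂]; exact zero_mem _
      exact hle hs
    have hdense : Dense (AddSubgroup.zmultiples θ : Set (AddCircle T)) := by
      have hsurj : Function.Surjective ((↑) : ℝ → AddCircle T) :=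
        QuotientAddGroup.mk_surjective
      have hcont : Continuous ((↑) : ℝ → AddCircle T) := continuous_quotient_mk'
      exact (hsurj.denseRange.dense_image hcont hS).mono himg
    have hmem : ((p - x : ℝ) : AddCircle T) ∈ (AddSubgroup.zmultiples θ).topologicalClosure := by
      show ((p - x : ℝ) : AddCircle T) ∈ closure (AddSubgroup.zmultiples θ : Set (AddCircle T))
      rw [hdense.closure_eq]; trivial
    have hclus : MapClusterPt ((p - x : ℝ) : AddCircle T) atTop (fun n : ℕ => n • θ) :=
      mapClusterPt_atTop_nsmul_iff_mem_topologicalClosure_zmultiples.mpr hmem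
    set V : Set (AddCircle T) := ((↑) : ℝ → AddCircle T) '' Metric.ball (p - x) δ with hV
    have hVopen : IsOpen V := QuotientAddGroup.isOpenMap_coe _ Metric.isOpen_ball
    have hVmem : ((p - x : ℝ) : AddCircle T) ∈ V :=
      ⟨p - x, Metric.mem_ball_self hδ, rfl⟩
    have hfreq : ∃ᶠ n : ℕ in atTop, (n • θ) ∈ V :=
      (mapClusterPt_iff_frequently.mp hclus) V (hVopen.mem_nhds hVmem)
    set d : ℝ := c ^ |b₁| with hd'
    have hd : 1 < d := by
      rw [hd']
      exact (Real.one_lt_rpow_iff_of_pos hc0).2 (Or.inl ⟨hc, abs_pos.mpr hb₁⟩)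
    have htend : Tendsto (fun n : ℕ => |φ₂ x| * d ^ n) atTop atTop :=
      Tendsto.const_mul_atTop (abs_pos.mpr hx0) (tendsto_pow_atTop_atTop_of_one_lt hd)
    have hev : ∀ᶠ n : ℕ in atTop, M < |φ₂ x| * d ^ n := htend.eventually_gt_atTop M
    obtain ⟨n, hnV, hnM⟩ := (hfreq.and_eventually hev).exists
    obtain ⟨y, hy, hyeq⟩ := hnV
    have h5 : ((y : ℝ) : AddCircle T) = (((n : ℝ) * a : ℝ) : AddCircle T) := by
      rw [hyeq, hθ, QuotientAddGroup.mk_nat_mul]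
    rw [QuotientAddGroup.eq_iff_sub_mem] at h5
    obtain ⟨m, hm⟩ := AddSubgroup.mem_zmultiples_iff.mp h5
    rw [zsmul_eq_mul] at hm
    -- so y = n*a + m*T
    have hyval : y = (n : ℝ) * a + (m : ℝ) * T := by linarith [hm]
    have hxy : x + y ∈ Metric.ball p δ := by
      rw [Metric.mem_ball, Real.dist_eq] at hy ⊢
      have h6 : x + y - p = y - (p - x) := by ring
      rw [h6]
      exact hy
    have hval : φ₂ (x + y) = φ₂ x * d ^ n := by
      have hrw : x + y = (x + ((n : ℤ) * e₁ : ℤ) * b₁) + ((m * e₂ : ℤ) : ℝ) * b₂ := by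
        rw [hyval, he₁, he₂]; push_cast; ring
      rw [hrw, per2, key]
      congr 1
      have hexp : -((((n : ℤ) * e₁ : ℤ) : ℝ) * b₁) = (n : ℝ) * |b₁| := by
        have : (((n : ℤ) * e₁ : ℤ) : ℝ) * b₁ = (n : ℝ) * ((e₁ : ℝ) * b₁) := by push_cast; ring
        rw [this, ← he₁, ha]; ring
      rw [hexp, hd', ← Real.rpow_natCast (c ^ |b₁|) n, ← Real.rpow_mul hc0.le]
      ring_nf
    have hMle : |φ₂ (x + y)| ≤ M := hM _ hxy
    rw [hval, abs_mul, abs_of_pos (pow_pos (lt_trans one_pos hd) n)] at hMle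
    linarith
end

section
/- Let a₁, a₂, b₁, b₂ be nonzero reals with |a₁|^{1/b₁} ≠ |a₂|^{1/b₂}. If a Baire class 1 function f : ℝ → ℝ satisfies both f(x+b₁) = a₁ f(x) and f(x+b₂) = a₂ f(x) for all x, then f is identically zero. -/
private lemma auxMulAbs (b : ℝ) (m' : ℤ) : ∃ m : ℤ, (m : ℝ) * b = (m' : ℝ) * |b| := by
  rcases le_or_gt 0 b with h | h
  · exact ⟨m', by rw [abs_of_nonneg h]⟩
  · exact ⟨-m', by rw [abs_of_neg h]; push_cast; ring⟩

private lemma auxA1 (u b α β x₀ : ℝ) (hu : 0 < u) (hlt : u < β - α) (hb : 0 < b) (J : ℝ) :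
    ∃ j : ℕ, J ≤ (j : ℝ) ∧ ∃ m : ℤ, x₀ + j * u + m * b ∈ Set.Ioo α β := by
  classical
  obtain ⟨J', hJ'⟩ := exists_nat_ge J
  obtain ⟨m, hm⟩ := exists_int_lt ((α - x₀ - J' * u) / b)
  have hmb : (m : ℝ) * b < α - x₀ - J' * u := by
    have := (mul_lt_mul_of_pos_right hm hb)
    rwa [div_mul_cancel₀ _ (ne_of_gt hb)] at this
  have hTpos : (J' : ℝ) * u < α - x₀ - m * b := by linarith
  set T : ℝ := α - x₀ - m * b with hT
  have hT0 : 0 ≤ T := le_trans (by positivity) hTpos.le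
  have hex : ∃ j : ℕ, T < j * u := by
    obtain ⟨n, hn⟩ := exists_nat_gt (T / u)
    exact ⟨n, by rwa [div_lt_iff₀ hu] at hn⟩
  set j := Nat.find hex with hjdef
  have hj : T < j * u := Nat.find_spec hex
  have hj0 : j ≠ 0 := by
    intro h
    rw [h] at hj
    simp at hj
    linarith
  have hj1 : ((j - 1 : ℕ) : ℝ) * u ≤ T := by
    by_contra hc
    exact Nat.find_min hex (Nat.sub_lt (Nat.pos_of_ne_zero hj0) one_pos) (lt_of_not_ge hc)
  have hcast : ((j - 1 : ℕ) : ℝ) = (j : ℝ) - 1 := by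
    rw [Nat.cast_sub (Nat.one_le_iff_ne_zero.mpr hj0)]; simp
  have hju : (j : ℝ) * u ≤ T + u := by
    rw [hcast] at hj1; nlinarith
  refine ⟨j, ?_, m, ?_, ?_⟩
  · have hJ'j : (J' : ℝ) < j := by
      by_contra hc
      push_neg at hc
      have : (j : ℝ) * u ≤ (J' : ℝ) * u := mul_le_mul_of_nonneg_right hc hu.le
      linarith
    linarith
  · -- α < x₀ + j * u + m * b
    have : T < (j : ℝ) * u := hj
    simp only [hT] at this
    linarith
  · have : (j : ℝ) * u < T + (β - α) := lt_of_le_of_lt hju (by linarith)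
    simp only [hT] at this
    linarith

private lemma auxA (u b α β x₀ : ℝ) (hu : u ≠ 0) (hlt : |u| < β - α) (hb : b ≠ 0) (J : ℝ) :
    ∃ j : ℕ, J ≤ (j : ℝ) ∧ ∃ m : ℤ, x₀ + j * u + m * b ∈ Set.Ioo α β := by
  have hb' : 0 < |b| := abs_pos.mpr hb
  rcases hu.lt_or_gt with hneg | hpos
  · have hu' : 0 < -u := by linarith
    have hlt' : -u < (2 * x₀ - α) - (2 * x₀ - β) := by
      rw [abs_of_neg hneg] at hlt; linarith
    obtain ⟨j, hjJ, m', hm'⟩ := auxA1 (-u) |b| (2 * x₀ - β) (2 * x₀ - α) x₀ hu' hlt' hb' J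
    obtain ⟨m, hm⟩ := auxMulAbs b (-m')
    refine ⟨j, hjJ, m, ?_, ?_⟩
    · have h1 := hm'.2
      have hmm : (m : ℝ) * b = -((m' : ℝ) * |b|) := by rw [hm]; push_cast; ring
      rw [hmm]; linarith
    · have h1 := hm'.1
      have hmm : (m : ℝ) * b = -((m' : ℝ) * |b|) := by rw [hm]; push_cast; ring
      rw [hmm]; linarith
  · have hlt' : u < β - α := by rwa [abs_of_pos hpos] at hlt
    obtain ⟨j, hjJ, m', hm'⟩ := auxA1 u |b| α β x₀ hpos hlt' hb' J
    obtain ⟨m, hm⟩ := auxMulAbs b m'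
    exact ⟨j, hjJ, m, by rw [hm]; exact hm'⟩

private lemma auxP (a b : ℝ) (ha : a ≠ 0) (f : ℝ → ℝ) (h : ∀ x, f (x + b) = a * f x) :
    ∀ (n : ℤ) (x : ℝ), f (x + n * b) = a ^ n * f x := by
  intro n
  induction n using Int.induction_on with
  | zero => simp
  | succ n ih =>
    intro x
    have e : x + ((n : ℤ) + 1 : ℤ) * b = (x + (n : ℤ) * b) + b := by push_cast; ring
    rw [e, h, ih, zpow_add_one₀ ha]; ring
  | pred n ih =>
    intro x
    apply mul_left_cancel₀ ha
    have e : (x + (-(n : ℤ) - 1 : ℤ) * b) + b = x + (-(n : ℤ) : ℤ) * b := by push_cast; ring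
    have key := h (x + (-(n : ℤ) - 1 : ℤ) * b)
    rw [e, ih] at key
    rw [← key]
    have : a * a ^ (-(n : ℤ) - 1 : ℤ) = a ^ (-(n : ℤ) : ℤ) := by
      rw [show (-(n : ℤ) : ℤ) = (-(n : ℤ) - 1) + 1 from by ring, zpow_add_one₀ ha]; ring
    rw [← mul_assoc, this]

private lemma auxBaire (f : ℝ → ℝ) (hf : BaireClassOne f) :
    ∃ α β M : ℝ, α < β ∧ ∀ x ∈ Set.Ioo α β, |f x| ≤ M := by
  obtain ⟨g, hg, hlim⟩ := hf
  set C : ℕ → Set ℝ := fun n => {x | ∀ k, |g k x| ≤ n} with hC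
  have hclosed : ∀ n, IsClosed (C n) := by
    intro n
    have : C n = ⋂ k, {x | |g k x| ≤ n} := by
      ext x; simp [hC, Set.mem_iInter]
    rw [this]
    exact isClosed_iInter fun k => isClosed_le ((hg k).abs) continuous_const
  have hunion : ⋃ n, C n = Set.univ := by
    ext x
    simp only [Set.mem_iUnion, Set.mem_univ, iff_true]
    have hb : BddAbove (Set.range fun k => |g k x|) := ((hlim x).abs).bddAbove_range
    obtain ⟨c, hc⟩ := hb
    obtain ⟨n, hn⟩ := exists_nat_ge c
    exact ⟨n, fun k => le_trans (hc ⟨k, rfl⟩) hn⟩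
  obtain ⟨n, x₁, hx₁⟩ := nonempty_interior_of_iUnion_of_closed hclosed hunion
  obtain ⟨r, hr, hball⟩ := Metric.isOpen_iff.mp isOpen_interior x₁ hx₁
  refine ⟨x₁ - r, x₁ + r, n, by linarith, fun y hy => ?_⟩
  have hyC : y ∈ C n := interior_subset (hball (by rw [Real.ball_eq_Ioo]; exact hy))
  exact le_of_tendsto ((hlim y).abs) (Filter.Eventually.of_forall fun k => hyC k)

private lemma auxB (b s c d α β M x₀ : ℝ) (f : ℝ → ℝ)
    (hb : b ≠ 0) (hs : s ≠ 0) (hslt : |s| < β - α) (hd : d ≠ 0)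
    (hx₀ : f x₀ ≠ 0)
    (hM : ∀ x ∈ Set.Ioo α β, |f x| ≤ M)
    (H : ∀ k m : ℤ, |f (x₀ + ((k : ℝ) * s + (m : ℝ) * b))|
      = Real.exp (c * ((k : ℝ) * s + (m : ℝ) * b) + d * k) * |f x₀|) :
    False := by
  have hsabs : 0 < |s| := abs_pos.mpr hs
  have hαβ : α < β := by linarith
  have hM0 : 0 ≤ M := le_trans (abs_nonneg _)
    (hM ((α + β) / 2) ⟨by linarith, by linarith⟩)
  have hfx : 0 < |f x₀| := abs_pos.mpr hx₀
  set R : ℝ := |α - x₀| + |β - x₀| with hR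
  set J : ℝ := (Real.log (M + 1) - Real.log |f x₀| + |c| * R) / |d| with hJ
  obtain ⟨u, hu0, huabs, hk⟩ : ∃ u : ℝ, u ≠ 0 ∧ |u| = |s| ∧
      ∀ j : ℕ, ∃ k : ℤ, (k : ℝ) * s = (j : ℝ) * u ∧ d * k = |d| * j := by
    rcases hd.lt_or_gt with hdn | hdp
    · exact ⟨-s, neg_ne_zero.mpr hs, abs_neg s,
        fun j => ⟨-(j : ℤ), by push_cast; ring, by push_cast; rw [abs_of_neg hdn]; ring⟩⟩
    · exact ⟨s, hs, rfl,
        fun j => ⟨(j : ℤ), by push_cast; try ring, by push_cast; rw [abs_of_pos hdp]⟩⟩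
  obtain ⟨j, hjJ, m, hmem⟩ := auxA u b α β x₀ hu0 (by rw [huabs]; exact hslt) hb J
  obtain ⟨k, hks, hkd⟩ := hk j
  have hpt : x₀ + ((k : ℝ) * s + (m : ℝ) * b) = x₀ + (j : ℝ) * u + (m : ℝ) * b := by
    rw [hks]; ring
  have hmem' : x₀ + ((k : ℝ) * s + (m : ℝ) * b) ∈ Set.Ioo α β := by rw [hpt]; exact hmem
  have hle := hM _ hmem'
  rw [H k m] at hle
  set t : ℝ := (k : ℝ) * s + (m : ℝ) * b with ht
  have ht1 : α - x₀ < t := by have := hmem'.1; simp only [ht]; linarith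
  have ht2 : t < β - x₀ := by have := hmem'.2; simp only [ht]; linarith
  have htR : |t| ≤ R := by
    rw [abs_le]
    constructor
    · have := neg_abs_le (α - x₀); have := abs_nonneg (β - x₀); simp only [hR]; linarith
    · have := le_abs_self (β - x₀); have := abs_nonneg (α - x₀); simp only [hR]; linarith
  have hct : -(|c| * R) ≤ c * t := by
    have h1 : |c * t| ≤ |c| * R := by
      rw [abs_mul]
      exact mul_le_mul_of_nonneg_left htR (abs_nonneg c)
    have := neg_abs_le (c * t)
    linarith
  have hd' : 0 < |d| := abs_pos.mpr hd
  have hE : Real.log (M + 1) - Real.log |f x₀| ≤ c * t + d * k := by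
    rw [hkd]
    have h2 : J * |d| ≤ (j : ℝ) * |d| := mul_le_mul_of_nonneg_right hjJ hd'.le
    rw [hJ, div_mul_cancel₀ _ (ne_of_gt hd')] at h2
    linarith [mul_comm (|d|) (j : ℝ)]
  have hfinal : M + 1 ≤ Real.exp (c * t + d * k) * |f x₀| :=
    calc M + 1 = Real.exp (Real.log (M + 1)) := (Real.exp_log (by linarith)).symm
      _ ≤ Real.exp (c * t + d * k + Real.log |f x₀|) := Real.exp_le_exp.mpr (by linarith)
      _ = Real.exp (c * t + d * k) * |f x₀| := by rw [Real.exp_add, Real.exp_log hfx]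
  linarith

/-- If `a₁, a₂, b₁, b₂` are nonzero with `|a₁|^{1/b₁} ≠ |a₂|^{1/b₂}`, and a Baire class 1
function `f` satisfies `f (x+b₁) = a₁ f x` and `f (x+b₂) = a₂ f x` for all `x`,
then `f ≡ 0`. -/
theorem stmt11 (a₁ a₂ b₁ b₂ : ℝ) (ha₁ : a₁ ≠ 0) (ha₂ : a₂ ≠ 0) (hb₁ : b₁ ≠ 0) (hb₂ : b₂ ≠ 0)
    (hne : Real.exp (Real.log |a₁| / b₁) ≠ Real.exp (Real.log |a₂| / b₂))
    (f : ℝ → ℝ) (hf : BaireClassOne f)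
    (h₁ : ∀ x, f (x + b₁) = a₁ * f x) (h₂ : ∀ x, f (x + b₂) = a₂ * f x) :
    ∀ x, f x = 0 := by
  intro x₀
  by_contra hx₀
  have hL : Real.log |a₁| / b₁ ≠ Real.log |a₂| / b₂ := fun h => hne (by rw [h])
  set L₁ : ℝ := Real.log |a₁| with hL₁
  set L₂ : ℝ := Real.log |a₂| with hL₂
  have hP₁ := auxP a₁ b₁ ha₁ f h₁
  have hP₂ := auxP a₂ b₂ ha₂ f h₂
  have hzpow : ∀ (a : ℝ), a ≠ 0 → ∀ n : ℤ, |a| ^ n = Real.exp ((n : ℝ) * Real.log |a|) := by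
    intro a ha n
    rw [← Real.rpow_intCast |a| n, Real.rpow_def_of_pos (abs_pos.mpr ha), mul_comm]
  have habsz : ∀ (a : ℝ) (n : ℤ), |a ^ n| = |a| ^ n := fun a n =>
    map_zpow₀ (absHom : ℝ →*₀ ℝ) a n
  have habs : ∀ (n m : ℤ) (x : ℝ),
      |f (x + ((n : ℝ) * b₁ + (m : ℝ) * b₂))| = Real.exp ((n : ℝ) * L₁ + (m : ℝ) * L₂) * |f x| := by
    intro n m x
    have e1 : x + ((n : ℝ) * b₁ + (m : ℝ) * b₂) = (x + (n : ℝ) * b₁) + (m : ℝ) * b₂ := by ring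
    rw [e1, hP₂ m, abs_mul, hP₁ n, abs_mul, habsz, habsz, hzpow a₁ ha₁, hzpow a₂ ha₂,
      ← hL₁, ← hL₂, Real.exp_add]
    ring
  by_cases hrat : ∃ q : ℤ, q ≠ 0 ∧ ∃ p : ℤ, (q : ℝ) * b₂ = (p : ℝ) * b₁
  · obtain ⟨q, hq, p, hqp⟩ := hrat
    have hq' : (q : ℝ) ≠ 0 := Int.cast_ne_zero.mpr hq
    have hp : (p : ℝ) ≠ 0 := by
      intro h
      rw [h, zero_mul] at hqp
      rcases mul_eq_zero.mp hqp with h' | h'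
      · exact hq' h'
      · exact hb₂ h'
    have e1 := habs p 0 x₀
    have e2 := habs 0 q x₀
    simp only [Int.cast_zero, zero_mul, mul_zero, add_zero, zero_add] at e1 e2
    rw [← hqp] at e1
    have hexp : Real.exp ((p : ℝ) * L₁) = Real.exp ((q : ℝ) * L₂) := by
      have h3 : Real.exp ((p : ℝ) * L₁) * |f x₀| = Real.exp ((q : ℝ) * L₂) * |f x₀| := by
        rw [← e1, ← e2]
      exact mul_right_cancel₀ (by exact abs_ne_zero.mpr hx₀) h3
    have hlin : (p : ℝ) * L₁ = (q : ℝ) * L₂ := Real.exp_injective hexp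
    apply hL
    rw [div_eq_div_iff hb₁ hb₂]
    have key : (p : ℝ) * (q : ℝ) * (L₁ * b₂ - L₂ * b₁) = 0 := by linear_combination (q : ℝ) * b₂ * hlin + (q : ℝ) * L₂ * hqp
    have := mul_ne_zero hp hq'
    have h5 : L₁ * b₂ - L₂ * b₁ = 0 := by
      rcases mul_eq_zero.mp key with h | h
      · exact absurd h this
      · exact h
    linarith
  · obtain ⟨α, β, M, hαβ, hM⟩ := auxBaire f hf
    set G := AddSubgroup.closure ({b₁, b₂} : Set ℝ) with hG
    have hdense : Dense (G : Set ℝ) := by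
      rcases AddSubgroup.dense_or_cyclic G with h | ⟨a, ha⟩
      · exact h
      · exfalso
        have hb₁G : b₁ ∈ G := AddSubgroup.subset_closure (by simp)
        have hb₂G : b₂ ∈ G := AddSubgroup.subset_closure (by simp)
        rw [ha] at hb₁G hb₂G
        obtain ⟨n, hn⟩ := AddSubgroup.mem_closure_singleton.mp hb₁G
        obtain ⟨m, hm⟩ := AddSubgroup.mem_closure_singleton.mp hb₂G
        have hn0 : n ≠ 0 := by
          rintro rfl
          rw [zero_zsmul] at hn
          exact hb₁ hn.symm
        apply hrat
        refine ⟨n, hn0, m, ?_⟩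
        rw [← hn, ← hm]
        push_cast [zsmul_eq_mul]
        try ring
    set ε : ℝ := min (β - α) |b₁| with hε
    have hε0 : 0 < ε := lt_min (by linarith) (abs_pos.mpr hb₁)
    obtain ⟨s, hsG, hs⟩ := hdense.exists_between hε0
    have hdecomp : ∃ p q : ℤ, (p : ℝ) * b₁ + (q : ℝ) * b₂ = s := by
      have hGsup : G = AddSubgroup.closure {b₁} ⊔ AddSubgroup.closure {b₂} := by
        rw [← AddSubgroup.closure_union]
        congr 1
        try simp [Set.singleton_union]
      rw [hGsup] at hsG
      obtain ⟨y, hy, z, hz, hyz⟩ := AddSubgroup.mem_sup.mp hsG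
      obtain ⟨p, hp⟩ := AddSubgroup.mem_closure_singleton.mp hy
      obtain ⟨q, hq⟩ := AddSubgroup.mem_closure_singleton.mp hz
      exact ⟨p, q, by rw [← hyz, ← hp, ← hq]; push_cast [zsmul_eq_mul]; try ring⟩
    obtain ⟨p, q, hpq⟩ := hdecomp
    have hs0 : s ≠ 0 := ne_of_gt hs.1
    have hsb₁ : |s| < |b₁| := by
      rw [abs_of_pos hs.1]
      exact lt_of_lt_of_le hs.2 (min_le_right _ _)
    have hq0 : q ≠ 0 := by
      rintro rfl
      simp only [Int.cast_zero, zero_mul, add_zero] at hpq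
      have hp0 : p ≠ 0 := by
        rintro rfl
        simp at hpq
        exact hs0 hpq.symm
      have : |b₁| ≤ |s| := by
        rw [← hpq, abs_mul]
        have h1 : (1 : ℝ) ≤ |(p : ℝ)| := by
          rw [← Int.cast_abs]
          exact_mod_cast Int.one_le_abs (by simpa using hp0)
        nlinarith [abs_nonneg b₁]
      linarith
    have hq' : (q : ℝ) ≠ 0 := Int.cast_ne_zero.mpr hq0
    set c : ℝ := L₁ / b₁ with hc
    set d : ℝ := (L₂ / b₂ - L₁ / b₁) * (q : ℝ) * b₂ with hd
    have hdne : d ≠ 0 :=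
      mul_ne_zero (mul_ne_zero (sub_ne_zero.mpr (Ne.symm hL)) hq') hb₂
    have H : ∀ k m : ℤ, |f (x₀ + ((k : ℝ) * s + (m : ℝ) * b₁))|
        = Real.exp (c * ((k : ℝ) * s + (m : ℝ) * b₁) + d * k) * |f x₀| := by
      intro k m
      have e1 : (k : ℝ) * s + (m : ℝ) * b₁
          = ((k * p + m : ℤ) : ℝ) * b₁ + ((k * q : ℤ) : ℝ) * b₂ := by
        push_cast
        rw [← hpq]
        ring
      rw [e1, habs (k * p + m) (k * q) x₀]
      congr 1
      congr 1
      simp only [hc, hd]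
      push_cast
      field_simp
      ring
    exact auxB b₁ s c d α β M x₀ f hb₁ hs0
      (by rw [abs_of_pos hs.1]; exact lt_of_lt_of_le hs.2 (min_le_left _ _)) hdne hx₀ hM H
end

section
/- If f : ℝ → ℝ is of Baire class 1 and is periodic mod every element of a dense additive subgroup G ⊆ ℝ, then f is constant. -/
/-- A Baire class 1 function periodic mod every element of a dense additive subgroup of `ℝ`
is constant. -/
theorem stmt12 (f : ℝ → ℝ) (hf : BaireClassOne f) (G : AddSubgroup ℝ)
    (hd : Dense (G : Set ℝ)) (hper : ∀ g ∈ G, ∀ x : ℝ, f (x + g) = f x) :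
    ∃ c : ℝ, ∀ x, f x = c := by
  obtain ⟨g, hc, ht⟩ := hf
  have key : ∀ ε : ℝ, 0 < ε → ∀ y z : ℝ, |f y - f z| ≤ 6 * ε := by
    intro ε hε y z
    set F : ℕ → Set ℝ := fun N => {x | ∀ m ≥ N, ∀ n ≥ N, |g m x - g n x| ≤ ε} with hF
    have hclosed : ∀ N, IsClosed (F N) := by
      intro N
      have : F N = ⋂ (m : ℕ) (_ : m ≥ N) (n : ℕ) (_ : n ≥ N),
          {x | |g m x - g n x| ≤ ε} := by
        ext x; simp [hF, Set.mem_iInter]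
      rw [this]
      refine isClosed_iInter fun m => isClosed_iInter fun _ =>
        isClosed_iInter fun n => isClosed_iInter fun _ => ?_
      exact isClosed_le (by continuity) continuous_const
    have hcover : ⋃ N, F N = Set.univ := by
      ext x
      simp only [Set.mem_iUnion, Set.mem_univ, iff_true]
      have := (Metric.tendsto_atTop.1 (ht x)) (ε / 2) (by linarith)
      obtain ⟨N, hN⟩ := this
      refine ⟨N, fun m hm n hn => ?_⟩
      have h1 := hN m hm
      have h2 := hN n hn
      rw [Real.dist_eq] at h1 h2
      have : |g m x - g n x| ≤ |g m x - f x| + |g n x - f x| := by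
        rw [abs_sub_comm (g n x) (f x)]
        exact (abs_sub_le _ _ _).trans (by rw [abs_sub_comm (f x) (g n x)])
      linarith
    obtain ⟨N, hNne⟩ := nonempty_interior_of_iUnion_of_closed hclosed hcover
    obtain ⟨x₀, hx₀⟩ := hNne
    -- shrink: open set V where g N varies by < ε
    set V : Set ℝ := interior (F N) ∩ (g N) ⁻¹' Metric.ball (g N x₀) ε with hV
    have hVopen : IsOpen V := (isOpen_interior).inter ((hc N).isOpen_preimage _ Metric.isOpen_ball)
    have hx₀V : x₀ ∈ V := ⟨hx₀, by simp [Metric.mem_ball, hε]⟩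
    -- on F N, |f x - g N x| ≤ ε
    have hfg : ∀ x ∈ F N, |f x - g N x| ≤ ε := by
      intro x hx
      have htend : Filter.Tendsto (fun m => |g m x - g N x|) Filter.atTop
          (nhds (|f x - g N x|)) := ((ht x).sub tendsto_const_nhds).abs
      refine le_of_tendsto htend ?_
      filter_upwards [Filter.eventually_ge_atTop N] with m hm
      exact hx m hm N le_rfl
    have hosc : ∀ x ∈ V, |f x - f x₀| ≤ 3 * ε := by
      intro x hx
      have h1 : |f x - g N x| ≤ ε := hfg x (interior_subset hx.1)
      have h2 : |f x₀ - g N x₀| ≤ ε := hfg x₀ (interior_subset hx₀)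
      have h3 : |g N x - g N x₀| ≤ ε := le_of_lt (by simpa [Real.dist_eq] using hx.2)
      have t1 := abs_sub_le (f x) (g N x) (f x₀)
      have t2 := abs_sub_le (g N x) (g N x₀) (f x₀)
      rw [abs_sub_comm (g N x₀) (f x₀)] at t2
      linarith
    -- for any y, find γ ∈ G with y - γ ∈ V
    have hall : ∀ y : ℝ, |f y - f x₀| ≤ 3 * ε := by
      intro y
      have hne : (Set.image (fun v => y - v) V).Nonempty := ⟨y - x₀, x₀, hx₀V, rfl⟩
      have hopen : IsOpen (Set.image (fun v => y - v) V) := by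
        have : (fun v : ℝ => y - v) '' V = (fun v : ℝ => y - v) ⁻¹' V := by
          ext t; constructor
          · rintro ⟨v, hv, rfl⟩; simpa using hv
          · intro ht'; exact ⟨y - t, ht', by ring⟩
        rw [this]
        exact hVopen.preimage (by continuity)
      obtain ⟨γ, hγG, hγ⟩ := hd.exists_mem_open hopen hne
      obtain ⟨v, hvV, hveq⟩ := hγ
      have hy : v + γ = y := by rw [← hveq]; ring
      have : f y = f v := by rw [← hy, hper γ hγG v]
      rw [this]
      exact hosc v hvV
    have h1 := hall y
    have h2 := hall z
    calc |f y - f z| ≤ |f y - f x₀| + |f z - f x₀| := by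
          have := abs_sub_le (f y) (f x₀) (f z)
          rw [abs_sub_comm (f x₀) (f z)] at this
          linarith
      _ ≤ 6 * ε := by linarith
  refine ⟨f 0, fun x => ?_⟩
  by_contra h
  have habs : 0 < |f x - f 0| := abs_pos.2 (sub_ne_zero.2 h)
  have := key (|f x - f 0| / 12) (by linarith) x 0
  linarith
end

section
/- Let V ⊆ ℝ be a ℚ-linear subspace with basis {v_α : α < κ} indexed by ordinals below κ. For nonzero v ∈ V write v = Σ q_i v_{α_i} with q_i ∈ ℚ \ {0} and α_1 < ⋯ < α_n, and set φ(v) = q_n; let B = {v ∈ V : φ(v) > 0}. Then: (i) V = B ∪ (-B) ∪ {0} and B ∩ (-B) = ∅; (ii) for every b ∈ B, the symmetric difference (B + b) Δ B is contained in the ℚ-linear span of {v_α : α ≤ α_n(b)}, where α_n(b) is the largest basis index occurring in b. -/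
/-- Let `V ⊆ ℝ` be a `ℚ`-linear subspace with a basis indexed by a linearly ordered set.
For `v ≠ 0` let `φ v` be the coefficient of the basis vector of largest index in the
representation of `v`, and `B = {v : φ v > 0}`. Then `V = B ∪ (-B) ∪ {0}`,
`B ∩ (-B) = ∅`, and for `v ∈ B` with largest basis index `m`, the symmetric difference
`(B + v) Δ B` is contained in the span of the basis vectors of index `≤ m`. -/
theorem stmt14 {ι : Type*} [LinearOrder ι] (V : Submodule ℚ ℝ) (b : Module.Basis ι ℚ V) :
    let lastCoeff : V → ℚ := fun v =>
      WithBot.recBotCoe 0 (fun i => b.repr v i) (b.repr v).support.max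
    let B : Set V := {v | 0 < lastCoeff v}
    (∀ v : V, v = 0 ∨ v ∈ B ∨ -v ∈ B) ∧
    (∀ v : V, ¬ (v ∈ B ∧ -v ∈ B)) ∧
    (∀ v ∈ B, ∀ m : ι, (b.repr v).support.max = (m : WithBot ι) →
      ∀ x : V, ¬ ((x - v ∈ B) ↔ x ∈ B) →
        x ∈ Submodule.span ℚ (⇑b '' {i | i ≤ m})) := by
  intro lastCoeff B
  have hlc : ∀ w : V, lastCoeff w =
      WithBot.recBotCoe (0 : ℚ) (fun i => b.repr w i) (b.repr w).support.max := fun _ => rfl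
  have hneg : ∀ v : V, lastCoeff (-v) = - lastCoeff v := by
    intro v
    rw [hlc, hlc]
    simp only [map_neg, Finsupp.support_neg]
    cases h : (b.repr v).support.max with
    | bot => simp
    | coe i => simp
  refine ⟨?_, ?_, ?_⟩
  · intro v
    by_cases hv : v = 0
    · exact Or.inl hv
    · right
      have hs : (b.repr v).support.Nonempty := by
        rw [Finsupp.support_nonempty_iff]
        simpa using hv
      obtain ⟨M, hM⟩ := Finset.max_of_nonempty hs
      have hMs : M ∈ (b.repr v).support := Finset.mem_of_max hM
      have hne : b.repr v M ≠ 0 := Finsupp.mem_support_iff.mp hMs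
      have h1 : lastCoeff v = b.repr v M := by
        rw [hlc, hM]
        rfl
      rcases hne.lt_or_gt with h | h
      · right
        show 0 < lastCoeff (-v)
        rw [hneg, h1]; linarith
      · left
        show 0 < lastCoeff v
        rw [h1]; exact h
  · rintro v ⟨h1, h2⟩
    have h2' : 0 < lastCoeff (-v) := h2
    rw [hneg] at h2'
    have h1' : 0 < lastCoeff v := h1
    linarith
  · intro v hv m hm x hx
    by_contra hspan
    apply hx
    rw [Module.Basis.mem_span_image] at hspan
    rw [Set.not_subset] at hspan
    obtain ⟨j, hj, hjm⟩ := hspan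
    simp only [Set.mem_setOf_eq, not_le] at hjm
    have hj' : j ∈ (b.repr x).support := hj
    -- the max of support of x
    have hsx : (b.repr x).support.Nonempty := ⟨j, hj'⟩
    obtain ⟨M, hM⟩ := Finset.max_of_nonempty hsx
    have hMs : M ∈ (b.repr x).support := Finset.mem_of_max hM
    have hjM : j ≤ M := by
      have := Finset.le_max hj'
      rw [hM] at this
      exact_mod_cast this
    have hmM : m < M := lt_of_lt_of_le hjm hjM
    -- support of v is ≤ m
    have hvle : ∀ k ∈ (b.repr v).support, k ≤ m := by
      intro k hk
      have := Finset.le_max hk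
      rw [hm] at this
      exact_mod_cast this
    have hvM : ∀ k : ι, m < k → b.repr v k = 0 := by
      intro k hk
      by_contra h
      exact absurd (hvle k (Finsupp.mem_support_iff.mpr h)) (not_le.mpr hk)
    -- repr (x - v)
    have hsub : b.repr ((x : V) - v) = b.repr x - b.repr v := map_sub _ _ _
    have hagree : ∀ k : ι, m < k → b.repr (x - v) k = b.repr x k := by
      intro k hk
      rw [hsub, Finsupp.sub_apply, hvM k hk, sub_zero]
    have hMne : b.repr (x - v) M ≠ 0 := by
      rw [hagree M hmM]
      exact Finsupp.mem_support_iff.mp hMs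
    have hMmem : M ∈ (b.repr (x - v)).support := Finsupp.mem_support_iff.mpr hMne
    have hmax : (b.repr (x - v)).support.max = (M : WithBot ι) := by
      apply le_antisymm
      · apply Finset.max_le
        intro k hk
        rcases le_or_gt k m with h | h
        · exact_mod_cast le_of_lt (lt_of_le_of_lt h hmM)
        · have : b.repr x k ≠ 0 := by
            rw [← hagree k h]
            exact Finsupp.mem_support_iff.mp hk
          have := Finset.le_max (Finsupp.mem_support_iff.mpr this)
          rw [hM] at this
          exact this
      · exact Finset.le_max hMmem
    have key : lastCoeff (x - v) = lastCoeff x := by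
      rw [hlc, hlc, hmax, hM]
      exact hagree M hmM
    constructor
    · intro h
      have : 0 < lastCoeff (x - v) := h
      rw [key] at this
      exact this
    · intro h
      have : 0 < lastCoeff x := h
      show 0 < lastCoeff (x - v)
      rw [key]
      exact this
end

section
/- Let B ⊆ ℝ satisfy B ∩ (-B) = ∅ and B ∉ 𝓘, where 𝓘 is the ideal of Lebesgue null sets. If f₀ : ℝ → ℝ is zero outside a null set and f₀ - χ_B is periodic mod every element of B, then a contradiction follows; i.e., no function that vanishes almost everywhere can have the property that its difference with χ_B is periodic mod each b ∈ B, provided B is nonnull and B ∩ (-B) = ∅. (Key step: a function periodic mod every b ∈ B is also periodic mod every b ∈ -B and is constant on B ∪ (-B).) -/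
open MeasureTheory

/-- If `B ⊆ ℝ` is not Lebesgue null, `B ∩ (-B) = ∅`, `f₀ = 0` almost everywhere, and
`f₀ - χ_B` is periodic mod every element of `B`, then a contradiction follows. -/
theorem stmt15 (B : Set ℝ) (hdisj : B ∩ (-B) = ∅) (hnn : volume B ≠ 0)
    (f₀ : ℝ → ℝ) (hae : ∀ᵐ x ∂(volume : Measure ℝ), f₀ x = 0)
    (hper : ∀ b ∈ B, ∀ x : ℝ,
      f₀ (x + b) - Set.indicator B 1 (x + b) = f₀ x - Set.indicator B 1 x) :
    False := by
  have hZ : volume {x : ℝ | ¬ f₀ x = 0} = 0 := hae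
  -- find b₀ ∈ B with f₀ b₀ = 0
  have h1 : ∃ b ∈ B, f₀ b = 0 := by
    by_contra h
    push_neg at h
    have hsub : B ⊆ {x : ℝ | ¬ f₀ x = 0} := fun x hx => h x hx
    exact hnn (measure_mono_null hsub hZ)
  obtain ⟨b₀, hb₀, hfb₀⟩ := h1
  have key : f₀ 0 - Set.indicator B 1 0 = -1 := by
    have := hper b₀ hb₀ 0
    rw [zero_add] at this
    rw [Set.indicator_of_mem hb₀, hfb₀, Pi.one_apply] at this
    linarith [this.symm]
  -- find b₁ ∈ B with f₀ (-b₁) = 0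
  have hnB : volume (-B) ≠ 0 := by
    rwa [Measure.measure_neg]
  have h2 : ∃ x ∈ (-B : Set ℝ), f₀ x = 0 := by
    by_contra h
    push_neg at h
    have hsub : (-B : Set ℝ) ⊆ {x : ℝ | ¬ f₀ x = 0} := fun x hx => h x hx
    exact hnB (measure_mono_null hsub hZ)
  obtain ⟨x, hx, hfx⟩ := h2
  have hb₁ : -x ∈ B := hx
  have hxnB : x ∉ B := by
    intro hxB
    have : x ∈ B ∩ (-B) := ⟨hxB, hx⟩
    simp [hdisj] at this
  have := hper (-x) hb₁ x
  rw [add_neg_cancel, Set.indicator_of_notMem hxnB, hfx] at this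
  rw [key] at this
  norm_num at this
end

section
/- Let (h_n) be a sequence of functions on ℝ such that for every n and every closed subinterval I ⊆ [0,1] of length 1/n there is a closed nondegenerate subinterval J ⊆ I on which |h_n| > 1. Then the set A = {x ∈ [0,1] : h_n(x) → 0} is not residual (comeager) in [0,1]. -/
/-- If for every `n ≥ 1` and every closed subinterval `I ⊆ [0,1]` of length `1/n` there is a
closed nondegenerate subinterval `J ⊆ I` on which `|h n| > 1`, then the set of points of
`[0,1]` where `h n → 0` is not residual (comeager) in `[0,1]`. -/
theorem stmt19 (h : ℕ → ℝ → ℝ)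
    (hyp : ∀ n : ℕ, 1 ≤ n → ∀ a b : ℝ, 0 ≤ a → b ≤ 1 → b - a = 1 / n →
      ∃ c d : ℝ, a ≤ c ∧ c < d ∧ d ≤ b ∧ ∀ x ∈ Set.Icc c d, 1 < |h n x|) :
    ¬ ({x : Set.Icc (0 : ℝ) 1 |
          Filter.Tendsto (fun n => h n (x : ℝ)) Filter.atTop (nhds 0)}
        ∈ residual (Set.Icc (0 : ℝ) 1)) := by
  intro hA
  set X := Set.Icc (0 : ℝ) 1
  -- the dense open sets
  set W : ℕ → Set X := fun N =>
    ⋃ (n : ℕ) (_ : N ≤ n) (c : ℝ) (d : ℝ)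
      (_ : ∀ y ∈ Set.Ioo c d, 1 < |h n y|), (Subtype.val ⁻¹' Set.Ioo c d) with hW
  have hWopen : ∀ N, IsOpen (W N) := by
    intro N
    apply isOpen_iUnion; intro n; apply isOpen_iUnion; intro _
    apply isOpen_iUnion; intro c; apply isOpen_iUnion; intro d
    apply isOpen_iUnion; intro _
    exact isOpen_Ioo.preimage continuous_subtype_val
  have hWdense : ∀ N, Dense (W N) := by
    intro N
    rw [Metric.dense_iff]
    intro x ε hε
    -- choose n large
    set n : ℕ := max (max N 2) (Nat.ceil (2 / ε) + 2) with hn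
    have hn2 : 2 ≤ n := le_trans (le_max_right N 2) (le_max_left _ _)
    have hnN : N ≤ n := le_trans (le_max_left N 2) (le_max_left _ _)
    have hn1 : 1 ≤ n := le_trans (by norm_num) hn2
    have hnpos : (0:ℝ) < n := by positivity
    have hceil : (2 : ℝ) / ε < n := by
      have h1 : (2:ℝ)/ε ≤ Nat.ceil ((2:ℝ)/ε) := Nat.le_ceil _
      have h2 : (Nat.ceil ((2:ℝ)/ε) : ℕ) + 2 ≤ n := le_max_right _ _
      have h3 : ((Nat.ceil ((2:ℝ)/ε) : ℝ) + 2) ≤ (n:ℝ) := by exact_mod_cast h2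
      linarith
    have h2n : 2 / (n:ℝ) < ε := by
      rw [div_lt_iff₀ hε] at hceil
      rw [div_lt_iff₀ hnpos]
      nlinarith
    have h1n : 1 / (n:ℝ) ≤ 1/2 := by
      apply div_le_div_of_nonneg_left (by norm_num) (by norm_num)
      exact_mod_cast hn2
    have h1npos : 0 < 1 / (n:ℝ) := by positivity
    obtain ⟨hx0, hx1⟩ := x.2
    -- choose interval [a,b] ⊆ [0,1] of length 1/n near x
    obtain ⟨a, b, ha0, hb1, hba, hxa, hxb⟩ :
        ∃ a b : ℝ, 0 ≤ a ∧ b ≤ 1 ∧ b - a = 1 / n ∧ a ≤ (x:ℝ) ∧ (x:ℝ) ≤ b := by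
      by_cases hc : (x:ℝ) + 1/n ≤ 1
      · exact ⟨x, x + 1/n, hx0, hc, by ring, le_refl _, by linarith⟩
      · exact ⟨(x:ℝ) - 1/n, x, by push_neg at hc; linarith, hx1, by ring, by linarith, le_refl _⟩
    obtain ⟨c, d, hac, hcd, hdb, hcd1⟩ := hyp n hn1 a b ha0 hb1 hba
    set m : ℝ := (c + d) / 2 with hm
    have hmIoo : m ∈ Set.Ioo c d := ⟨by linarith, by linarith⟩
    obtain ⟨hcm, hmd⟩ := hmIoo
    have h1nε : 1 / (n:ℝ) < ε := by
      rw [div_lt_iff₀ hnpos] at h2n ⊢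
      linarith
    have hmX : m ∈ X := ⟨by linarith, by linarith⟩
    refine ⟨⟨m, hmX⟩, ?_, ?_⟩
    · rw [Metric.mem_ball]
      have : dist (⟨m, hmX⟩ : X) x = |m - (x:ℝ)| := by
        rw [Subtype.dist_eq, Real.dist_eq]
      rw [this, abs_sub_lt_iff]
      constructor <;> linarith
    · refine Set.mem_iUnion.2 ⟨n, Set.mem_iUnion.2 ⟨hnN, Set.mem_iUnion.2 ⟨c,
        Set.mem_iUnion.2 ⟨d, Set.mem_iUnion.2 ⟨fun y hy => hcd1 y ⟨le_of_lt hy.1, le_of_lt hy.2⟩, hcm, hmd⟩⟩⟩⟩⟩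
  -- intersection is residual, hence dense, hence nonempty
  have hWres : (⋂ N, W N) ∈ residual X :=
    countable_iInter_mem.2 fun N => residual_of_dense_open (hWopen N) (hWdense N)
  have hres : ({x : X | Filter.Tendsto (fun n => h n (x : ℝ)) Filter.atTop (nhds 0)}
      ∩ ⋂ N, W N) ∈ residual X := Filter.inter_mem hA hWres
  have hdense := dense_of_mem_residual hres
  have hne : Nonempty X := ⟨⟨0, le_refl 0, zero_le_one⟩⟩
  obtain ⟨x, hxA, hxW⟩ := hdense.nonempty
  -- contradiction
  obtain ⟨N, hN⟩ := (Metric.tendsto_atTop.1 hxA 1 one_pos)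
  have := Set.mem_iInter.1 hxW N
  simp only [W, Set.mem_iUnion] at this
  obtain ⟨n, hnN, c, d, hball, hxcd⟩ := this
  have h1 : 1 < |h n (x:ℝ)| := hball _ hxcd
  have h2 := hN n hnN
  rw [Real.dist_eq, sub_zero] at h2
  linarith
end
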